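/- Let ρ be a density operator in the spin-s representation such that the covariance matrix Λ(ρ) is diagonal, with diagonal entries μ₁, μ₂, μ₃. Then μ₁μ₂μ₃ ≥ (1/4)(λ₁²μ₁ + λ₂²μ₂ + λ₃²μ₃), where λ_k = tr(ρL_k). -/

import Mathlib

open Matrix Complex
open scoped ComplexOrder

noncomputable section

/-- spin value s = j/2 -/
def sVal (j : ℕ) : ℝ := (j : ℝ) / 2

/-- m-value of the k-th basis vector: m = k - s -/
def mVal (j : ℕ) (k : Fin (j + 1)) : ℝ := (k : ℝ) - sVal j

/-- L₃ -/
def L3 (j : ℕ) : Matrix (Fin (j + 1)) (Fin (j + 1)) ℂ :=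
  Matrix.diagonal (fun k => (mVal j k : ℂ))

/-- raising operator L₊ -/
def Lp (j : ℕ) : Matrix (Fin (j + 1)) (Fin (j + 1)) ℂ :=
  Matrix.of fun i k =>
    if (i : ℕ) = (k : ℕ) + 1 then
      ((Real.sqrt (sVal j * (sVal j + 1) - mVal j k * (mVal j k + 1)) : ℝ) : ℂ)
    else 0

/-- lowering operator L₋ -/
def Lm (j : ℕ) : Matrix (Fin (j + 1)) (Fin (j + 1)) ℂ :=
  Matrix.of fun i k =>
    if (i : ℕ) + 1 = (k : ℕ) then
      ((Real.sqrt (sVal j * (sVal j + 1) - mVal j k * (mVal j k - 1)) : ℝ) : ℂ)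
    else 0

/-- L₁ = (L₊ + L₋)/2 -/
def L1 (j : ℕ) : Matrix (Fin (j + 1)) (Fin (j + 1)) ℂ := (1 / 2 : ℂ) • (Lp j + Lm j)

/-- L₂ = (L₊ − L₋)/(2i) -/
def L2 (j : ℕ) : Matrix (Fin (j + 1)) (Fin (j + 1)) ℂ :=
  (1 / (2 * Complex.I)) • (Lp j - Lm j)

/-- density operator -/
def IsDensity {j : ℕ} (ρ : Matrix (Fin (j + 1)) (Fin (j + 1)) ℂ) : Prop :=
  ρ.PosSemidef ∧ ρ.trace = 1

/-- expectation value -/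
def expVal {j : ℕ} (ρ A : Matrix (Fin (j + 1)) (Fin (j + 1)) ℂ) : ℝ :=
  ((ρ * A).trace).re

/-- variance -/
def Var {j : ℕ} (ρ A : Matrix (Fin (j + 1)) (Fin (j + 1)) ℂ) : ℝ :=
  ((ρ * A ^ 2).trace).re - (((ρ * A).trace).re) ^ 2

/-- angular momentum component along a direction e ∈ ℝ³ -/
def dirL (j : ℕ) (e : Fin 3 → ℝ) : Matrix (Fin (j + 1)) (Fin (j + 1)) ℂ :=
  (e 0 : ℂ) • L1 j + (e 1 : ℂ) • L2 j + (e 2 : ℂ) • L3 j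

/-- the three angular momentum components as a function `Fin 3 → Matrix` -/
def Lcomp (j : ℕ) : Fin 3 → Matrix (Fin (j + 1)) (Fin (j + 1)) ℂ := ![L1 j, L2 j, L3 j]

/-- the covariance matrix Λ(ρ) -/
def covMat {j : ℕ} (ρ : Matrix (Fin (j + 1)) (Fin (j + 1)) ℂ) : Matrix (Fin 3) (Fin 3) ℝ :=
  Matrix.of fun a b =>
    ((ρ * (Lcomp j a * Lcomp j b)).trace).re - expVal ρ (Lcomp j a) * expVal ρ (Lcomp j b)

lemma sVal_nonneg (j : ℕ) : 0 ≤ sVal j := by unfold sVal; positivity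

lemma mVal_bounds (j : ℕ) (k : Fin (j+1)) : -sVal j ≤ mVal j k ∧ mVal j k ≤ sVal j := by
  have h1 : (0:ℝ) ≤ (k : ℕ) := Nat.cast_nonneg _
  have h2 : ((k : ℕ) : ℝ) ≤ j := by exact_mod_cast Nat.lt_succ_iff.mp k.isLt
  constructor <;> (simp only [mVal, sVal]; push_cast; linarith)

lemma argm_nonneg (j : ℕ) (k : Fin (j+1)) :
    0 ≤ sVal j * (sVal j + 1) - mVal j k * (mVal j k - 1) := by
  obtain ⟨h1, h2⟩ := mVal_bounds j k
  nlinarith [sVal_nonneg j]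

lemma argp_nonneg (j : ℕ) (k : Fin (j+1)) :
    0 ≤ sVal j * (sVal j + 1) - mVal j k * (mVal j k + 1) := by
  obtain ⟨h1, h2⟩ := mVal_bounds j k
  nlinarith [sVal_nonneg j]

lemma LpLm_eq (j : ℕ) : Lp j * Lm j =
    Matrix.diagonal (fun k => ((sVal j * (sVal j + 1) - mVal j k * (mVal j k - 1) : ℝ) : ℂ)) := by
  ext i k
  rw [Matrix.mul_apply]
  by_cases hik : i = k
  · subst hik
    rw [Matrix.diagonal_apply_eq]
    by_cases h0 : (i : ℕ) = 0
    · rw [Finset.sum_eq_zero]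
      · have hm : mVal j i = -sVal j := by simp [mVal, h0]
        have : sVal j * (sVal j + 1) - mVal j i * (mVal j i - 1) = 0 := by rw [hm]; ring
        rw [this]; simp
      · intro l _
        simp only [Lp, Lm, Matrix.of_apply]
        rw [if_neg (by omega : ¬ ((i:ℕ) = (l:ℕ) + 1)), zero_mul]
    · have hlt : (i : ℕ) - 1 < j + 1 := by omega
      rw [Fintype.sum_eq_single (⟨(i : ℕ) - 1, hlt⟩ : Fin (j+1))]
      · simp only [Lp, Lm, Matrix.of_apply]
        rw [if_pos (show (i:ℕ) = ((⟨(i:ℕ)-1, hlt⟩ : Fin (j+1)):ℕ) + 1 by simp only [Fin.val_mk]; omega),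
          if_pos (show ((⟨(i:ℕ)-1, hlt⟩ : Fin (j+1)):ℕ) + 1 = (i:ℕ) by simp only [Fin.val_mk]; omega),
          ← Complex.ofReal_mul]
        congr 1
        have hm : mVal j (⟨(i : ℕ) - 1, hlt⟩ : Fin (j+1)) = mVal j i - 1 := by
          simp only [mVal, Fin.val_mk]
          have : (((i:ℕ) - 1 : ℕ) : ℝ) = (i : ℕ) - 1 := by
            push_cast [Nat.cast_sub (by omega : 1 ≤ (i:ℕ))]; ring
          rw [this]; ring
        rw [hm]
        have harg : sVal j * (sVal j + 1) - (mVal j i - 1) * ((mVal j i - 1) + 1)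
            = sVal j * (sVal j + 1) - mVal j i * (mVal j i - 1) := by ring
        rw [harg, Real.mul_self_sqrt (argm_nonneg j i)]
      · intro l hl
        simp only [Lp, Lm, Matrix.of_apply]
        have hlv : (l : ℕ) ≠ (i : ℕ) - 1 := by
          intro hc; exact hl (Fin.ext (by simp [hc]))
        split_ifs <;> first | (exfalso; omega) | simp
  · rw [Matrix.diagonal_apply_ne _ hik, Finset.sum_eq_zero]
    intro l _
    simp only [Lp, Lm, Matrix.of_apply]
    have : (i : ℕ) ≠ (k : ℕ) := fun hc => hik (Fin.ext hc)
    split_ifs <;> first | (exfalso; omega) | simp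

lemma LmLp_eq (j : ℕ) : Lm j * Lp j =
    Matrix.diagonal (fun k => ((sVal j * (sVal j + 1) - mVal j k * (mVal j k + 1) : ℝ) : ℂ)) := by
  ext i k
  rw [Matrix.mul_apply]
  by_cases hik : i = k
  · subst hik
    rw [Matrix.diagonal_apply_eq]
    by_cases h0 : (i : ℕ) = j
    · rw [Finset.sum_eq_zero]
      · have hm : mVal j i = sVal j := by
          simp only [mVal, h0, sVal]; ring
        have : sVal j * (sVal j + 1) - mVal j i * (mVal j i + 1) = 0 := by rw [hm]; ring
        rw [this]; simp
      · intro l _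
        simp only [Lp, Lm, Matrix.of_apply]
        have : ¬ ((i:ℕ) + 1 = (l:ℕ)) := by have := l.isLt; omega
        rw [if_neg this, zero_mul]
    · have hlt : (i : ℕ) + 1 < j + 1 := by have := i.isLt; omega
      rw [Fintype.sum_eq_single (⟨(i : ℕ) + 1, hlt⟩ : Fin (j+1))]
      · simp only [Lp, Lm, Matrix.of_apply]
        rw [if_pos (by simp only [Fin.val_mk]), if_pos (by simp only [Fin.val_mk]),
          ← Complex.ofReal_mul]
        congr 1
        have hm : mVal j (⟨(i : ℕ) + 1, hlt⟩ : Fin (j+1)) = mVal j i + 1 := by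
          simp only [mVal, Fin.val_mk]; push_cast; ring
        rw [hm]
        have harg : sVal j * (sVal j + 1) - (mVal j i + 1) * ((mVal j i + 1) - 1)
            = sVal j * (sVal j + 1) - mVal j i * (mVal j i + 1) := by ring
        rw [harg, Real.mul_self_sqrt (argp_nonneg j i)]
      · intro l hl
        simp only [Lp, Lm, Matrix.of_apply]
        have hlv : (l : ℕ) ≠ (i : ℕ) + 1 := by
          intro hc; exact hl (Fin.ext (by simp [hc]))
        split_ifs <;> first | (exfalso; omega) | simp
  · rw [Matrix.diagonal_apply_ne _ hik, Finset.sum_eq_zero]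
    intro l _
    simp only [Lp, Lm, Matrix.of_apply]
    have : (i : ℕ) ≠ (k : ℕ) := fun hc => hik (Fin.ext hc)
    split_ifs <;> first | (exfalso; omega) | simp

lemma hIdiv : (1:ℂ)/(2*Complex.I) = -(Complex.I)/2 := by
  rw [div_eq_div_iff (by simp [Complex.I_ne_zero]) (by norm_num : (2:ℂ) ≠ 0)]
  ring_nf
  simp [Complex.I_sq]

lemma commLpLm (j : ℕ) : Lp j * Lm j = Lm j * Lp j + (2:ℂ) • L3 j := by
  rw [LpLm_eq, LmLp_eq, L3]
  ext i k
  simp only [Matrix.add_apply, Matrix.smul_apply, Matrix.diagonal_apply, smul_eq_mul]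
  split_ifs with h
  · push_cast; ring
  · ring

lemma comm3p (j : ℕ) : L3 j * Lp j = Lp j * L3 j + Lp j := by
  ext i k
  simp only [Matrix.add_apply, L3, Matrix.diagonal_mul, Matrix.mul_diagonal, Lp, Matrix.of_apply]
  split_ifs with h
  · have : (i : ℝ) = (k : ℝ) + 1 := by exact_mod_cast h
    simp only [mVal]
    push_cast [this]
    ring
  · ring

lemma comm3m (j : ℕ) : L3 j * Lm j = Lm j * L3 j - Lm j := by
  ext i k
  simp only [Matrix.sub_apply, L3, Matrix.diagonal_mul, Matrix.mul_diagonal, Lm, Matrix.of_apply]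
  split_ifs with h
  · have : (i : ℝ) + 1 = (k : ℝ) := by exact_mod_cast h
    simp only [mVal]
    push_cast [← this]
    ring
  · ring

lemma comm12 (j : ℕ) : L1 j * L2 j - L2 j * L1 j = Complex.I • L3 j := by
  unfold L1 L2
  rw [hIdiv]
  simp only [Matrix.smul_mul, Matrix.mul_smul, Matrix.add_mul, Matrix.mul_add, Matrix.sub_mul,
    Matrix.mul_sub, commLpLm j]
  module

lemma comm23 (j : ℕ) : L2 j * L3 j - L3 j * L2 j = Complex.I • L1 j := by
  unfold L1 L2
  rw [hIdiv]
  simp only [Matrix.smul_mul, Matrix.mul_smul, Matrix.add_mul, Matrix.mul_add, Matrix.sub_mul,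
    Matrix.mul_sub, comm3p j, comm3m j]
  module

lemma comm31 (j : ℕ) : L3 j * L1 j - L1 j * L3 j = Complex.I • L2 j := by
  unfold L1 L2
  rw [hIdiv]
  simp only [Matrix.smul_mul, Matrix.mul_smul, Matrix.add_mul, Matrix.mul_add, Matrix.sub_mul,
    Matrix.mul_sub, comm3p j, comm3m j]
  match_scalars <;> ring_nf <;> simp [Complex.I_sq] <;> ring_nf

lemma Lp_conjT (j : ℕ) : (Lp j)ᴴ = Lm j := by
  ext i k
  simp only [Matrix.conjTranspose_apply, Lp, Lm, Matrix.of_apply]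
  by_cases h : (i : ℕ) + 1 = (k : ℕ)
  · rw [if_pos h.symm, if_pos h]
    rw [Complex.star_def, Complex.conj_ofReal]
    congr 2
    have hm : mVal j k = mVal j i + 1 := by
      simp only [mVal]
      have : ((k:ℕ) : ℝ) = ((i:ℕ) : ℝ) + 1 := by exact_mod_cast h.symm
      rw [this]; ring
    rw [hm]; ring
  · rw [if_neg (fun hc => h hc.symm), if_neg h, star_zero]

lemma Lm_conjT (j : ℕ) : (Lm j)ᴴ = Lp j := by
  rw [← Lp_conjT, Matrix.conjTranspose_conjTranspose]

lemma L1_herm (j : ℕ) : (L1 j).IsHermitian := by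
  unfold L1 Matrix.IsHermitian
  rw [Matrix.conjTranspose_smul, Matrix.conjTranspose_add, Lp_conjT, Lm_conjT]
  rw [show star ((1:ℂ)/2) = (1:ℂ)/2 by simp]
  rw [add_comm (Lm j)]

lemma L2_herm (j : ℕ) : (L2 j).IsHermitian := by
  unfold L2 Matrix.IsHermitian
  rw [Matrix.conjTranspose_smul, Matrix.conjTranspose_sub, Lp_conjT, Lm_conjT, hIdiv]
  rw [show star (-(Complex.I)/2) = Complex.I/2 by simp [Complex.star_def]]
  module

lemma L3_herm (j : ℕ) : (L3 j).IsHermitian := by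
  unfold L3
  apply Matrix.isHermitian_diagonal_of_self_adjoint
  funext k
  simp [Complex.star_def, Complex.conj_ofReal]

section traces
variable {n : Type*} [Fintype n] [DecidableEq n]

lemma star_trace_mul (ρ X : Matrix n n ℂ) (hρ : ρ.IsHermitian) :
    star ((ρ * X).trace) = (ρ * Xᴴ).trace := by
  rw [← Matrix.trace_conjTranspose, Matrix.conjTranspose_mul, hρ.eq, Matrix.trace_mul_comm]

lemma trace_conjTranspose_mul_self_nonneg (N : Matrix n n ℂ) : 0 ≤ (Nᴴ * N).trace := by
  rw [Matrix.trace]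
  apply Finset.sum_nonneg
  intro i _
  rw [Matrix.diag_apply, Matrix.mul_apply]
  apply Finset.sum_nonneg
  intro k _
  rw [Matrix.conjTranspose_apply]
  exact star_mul_self_nonneg _

open scoped MatrixOrder in
lemma trace_rho_BHB_nonneg (ρ : Matrix n n ℂ) (hρ : ρ.PosSemidef) (B : Matrix n n ℂ) :
    0 ≤ (ρ * (Bᴴ * B)).trace := by
  set S := CFC.sqrt ρ with hSdef
  have hS : Sᴴ = S := (CFC.sqrt_nonneg ρ).posSemidef.1
  have hSS : S * S = ρ := CFC.sqrt_mul_sqrt_self ρ hρ.nonneg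
  have key : (ρ * (Bᴴ * B)).trace = ((B * S)ᴴ * (B * S)).trace := by
    rw [Matrix.conjTranspose_mul, hS]
    have h1 : S * Bᴴ * (B * S) = S * (Bᴴ * B * S) := by simp only [Matrix.mul_assoc]
    rw [h1, Matrix.trace_mul_comm S (Bᴴ * B * S), Matrix.mul_assoc (Bᴴ * B) S S, hSS,
      Matrix.trace_mul_comm]
  rw [key]
  exact trace_conjTranspose_mul_self_nonneg _

lemma gram_posSemidef {m : Type*} [Fintype m] [DecidableEq m]
    (ρ : Matrix n n ℂ) (hρ : ρ.PosSemidef) (A : m → Matrix n n ℂ)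
    (hA : ∀ a, (A a).IsHermitian) :
    (Matrix.of fun a b : m => (ρ * (A a * A b)).trace).PosSemidef := by
  refine Matrix.PosSemidef.of_dotProduct_mulVec_nonneg ?_ ?_
  · ext a b
    simp only [Matrix.conjTranspose_apply, Matrix.of_apply]
    rw [star_trace_mul _ _ hρ.1, Matrix.conjTranspose_mul, (hA a).eq, (hA b).eq]
  · intro x
    set B : Matrix n n ℂ := ∑ b, x b • A b with hB
    have hBH : Bᴴ = ∑ a, (star (x a)) • A a := by
      rw [hB, Matrix.conjTranspose_sum]
      congr 1; funext a
      rw [Matrix.conjTranspose_smul, (hA a).eq]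
    have key : dotProduct (star x) ((Matrix.of fun a b : m => (ρ * (A a * A b)).trace) *ᵥ x)
        = (ρ * (Bᴴ * B)).trace := by
      rw [hBH, hB]
      rw [Matrix.sum_mul]
      simp only [Matrix.smul_mul, Finset.smul_sum, Matrix.mul_smul]
      rw [Matrix.mul_sum, Matrix.trace_sum]
      simp only [Matrix.mul_sum, Matrix.trace_sum, Matrix.mul_smul, Matrix.trace_smul,
        smul_eq_mul]
      rw [dotProduct, Finset.sum_congr rfl]
      intro a _
      simp only [Matrix.mulVec, dotProduct, Matrix.of_apply, Pi.star_apply,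
        Finset.mul_sum]
      exact Finset.sum_congr rfl fun b _ => by ring
    rw [key]
    exact trace_rho_BHB_nonneg ρ hρ B
end traces

/-- if Λ(ρ) is diagonal with diagonal entries μ₁, μ₂, μ₃, then
    μ₁μ₂μ₃ ≥ (1/4)(λ₁²μ₁ + λ₂²μ₂ + λ₃²μ₃). -/
theorem covariance_diagonal_det_bound (j : ℕ) (hj : 0 < j)
    (ρ : Matrix (Fin (j + 1)) (Fin (j + 1)) ℂ) (hρ : IsDensity ρ)
    (hdiag : ∀ a b : Fin 3, a ≠ b → covMat ρ a b = 0) :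
    covMat ρ 0 0 * covMat ρ 1 1 * covMat ρ 2 2 ≥
      (1 / 4) * (expVal ρ (Lcomp j 0) ^ 2 * covMat ρ 0 0 +
        expVal ρ (Lcomp j 1) ^ 2 * covMat ρ 1 1 +
        expVal ρ (Lcomp j 2) ^ 2 * covMat ρ 2 2) := by
  obtain ⟨hps, htr⟩ := hρ
  have hρH : ρ.IsHermitian := hps.1
  set l : Fin 3 → ℝ := fun a => expVal ρ (Lcomp j a) with hl
  have hLH : ∀ a : Fin 3, (Lcomp j a).IsHermitian := by
    intro a
    fin_cases a
    · exact L1_herm j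
    · exact L2_herm j
    · exact L3_herm j
  have hlam : ∀ a, (ρ * Lcomp j a).trace = ((l a : ℝ) : ℂ) := by
    intro a
    have h := star_trace_mul ρ (Lcomp j a) hρH
    rw [(hLH a).eq] at h
    exact (Complex.conj_eq_iff_re.mp h).symm
  -- T a b notation
  set T : Fin 3 → Fin 3 → ℂ := fun a b => (ρ * (Lcomp j a * Lcomp j b)).trace with hT
  have hTstar : ∀ a b, star (T a b) = T b a := by
    intro a b
    rw [hT]
    simp only
    rw [star_trace_mul ρ _ hρH, Matrix.conjTranspose_mul, (hLH a).eq, (hLH b).eq]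
  have hTdiag : ∀ a, T a a = ((covMat ρ a a : ℝ) : ℂ) + ((l a : ℝ) : ℂ) * ((l a : ℝ) : ℂ) := by
    intro a
    have hre : (T a a).re = covMat ρ a a + l a * l a := by
      simp only [covMat, Matrix.of_apply, hT, hl]
      ring
    have hreal := Complex.conj_eq_iff_re.mp (hTstar a a)
    rw [← hreal, hre]
    push_cast
    ring
  -- off-diagonal values
  have hoff : ∀ a b c : Fin 3, a ≠ b →
      (Lcomp j a * Lcomp j b - Lcomp j b * Lcomp j a = Complex.I • Lcomp j c) →
      T a b = ((l a * l b : ℝ) : ℂ) + ((l c / 2 : ℝ) : ℂ) * Complex.I := by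
    intro a b c hab hcomm
    have hre : (T a b).re = l a * l b := by
      have h0 := hdiag a b hab
      simp only [covMat, Matrix.of_apply] at h0
      have : (T a b).re - l a * l b = 0 := h0
      linarith
    have hsub : T a b - T b a = Complex.I * ((l c : ℝ) : ℂ) := by
      rw [hT]
      simp only
      rw [← Matrix.trace_sub, ← Matrix.mul_sub, hcomm, Matrix.mul_smul, Matrix.trace_smul,
        smul_eq_mul, hlam c]
    have him : (T a b).im = l c / 2 := by
      have h1 : (T b a).im = -(T a b).im := by
        rw [← hTstar a b]
        simp [Complex.star_def]
      have h2 := congrArg Complex.im hsub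
      simp [h1] at h2
      linarith
    rw [← Complex.re_add_im (T a b), hre, him]
  -- centered observables
  set A : Fin 3 → Matrix (Fin (j+1)) (Fin (j+1)) ℂ := fun a => Lcomp j a - ((l a : ℝ) : ℂ) • 1
    with hAdef
  have hAH : ∀ a, (A a).IsHermitian := by
    intro a
    rw [hAdef]
    unfold Matrix.IsHermitian
    rw [Matrix.conjTranspose_sub, (hLH a).eq, Matrix.conjTranspose_smul, Matrix.conjTranspose_one]
    congr 1
    simp [Complex.star_def, Complex.conj_ofReal]
  have hMps := gram_posSemidef ρ hps A hAH
  have hMentry : ∀ a b, (ρ * (A a * A b)).trace = T a b - ((l a : ℝ) : ℂ) * ((l b : ℝ) : ℂ) := by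
    intro a b
    rw [hAdef]
    simp only [Matrix.sub_mul, Matrix.mul_sub, Matrix.smul_mul, Matrix.mul_smul, Matrix.one_mul,
      Matrix.mul_one, smul_smul, Matrix.trace_sub, Matrix.trace_smul, smul_eq_mul]
    rw [hlam a, hlam b, htr]
    rw [hT]
    ring
  -- commutation relations at Lcomp level
  have c01 : Lcomp j 0 * Lcomp j 1 - Lcomp j 1 * Lcomp j 0 = Complex.I • Lcomp j 2 := by
    simp only [Lcomp, Matrix.cons_val_zero, Matrix.cons_val_one, Matrix.head_cons]
    show L1 j * L2 j - L2 j * L1 j = Complex.I • _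
    rw [show (![L1 j, L2 j, L3 j] : Fin 3 → _) 2 = L3 j from rfl]
    exact comm12 j
  have c12 : Lcomp j 1 * Lcomp j 2 - Lcomp j 2 * Lcomp j 1 = Complex.I • Lcomp j 0 := by
    simp only [Lcomp, Matrix.cons_val_zero, Matrix.cons_val_one, Matrix.head_cons]
    rw [show (![L1 j, L2 j, L3 j] : Fin 3 → _) 2 = L3 j from rfl]
    exact comm23 j
  have c20 : Lcomp j 2 * Lcomp j 0 - Lcomp j 0 * Lcomp j 2 = Complex.I • Lcomp j 1 := by
    simp only [Lcomp, Matrix.cons_val_zero, Matrix.cons_val_one, Matrix.head_cons]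
    rw [show (![L1 j, L2 j, L3 j] : Fin 3 → _) 2 = L3 j from rfl]
    exact comm31 j
  have hoff' : ∀ a b c : Fin 3, a ≠ b →
      (Lcomp j a * Lcomp j b - Lcomp j b * Lcomp j a = Complex.I • Lcomp j c) →
      T b a = ((l a * l b : ℝ) : ℂ) - ((l c / 2 : ℝ) : ℂ) * Complex.I := by
    intro a b c hab hc
    rw [← hTstar a b, hoff a b c hab hc]
    simp [Complex.star_def, Complex.conj_ofReal, map_add, _root_.map_mul, Complex.conj_I]
    ring
  set Mex : Matrix (Fin 3) (Fin 3) ℂ :=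
    !![((covMat ρ 0 0 : ℝ) : ℂ), ((l 2 / 2 : ℝ) : ℂ) * Complex.I, -(((l 1 / 2 : ℝ) : ℂ) * Complex.I);
       -(((l 2 / 2 : ℝ) : ℂ) * Complex.I), ((covMat ρ 1 1 : ℝ) : ℂ), ((l 0 / 2 : ℝ) : ℂ) * Complex.I;
       ((l 1 / 2 : ℝ) : ℂ) * Complex.I, -(((l 0 / 2 : ℝ) : ℂ) * Complex.I), ((covMat ρ 2 2 : ℝ) : ℂ)]
    with hMexdef
  have hM : (Matrix.of fun a b : Fin 3 => (ρ * (A a * A b)).trace) = Mex := by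
    ext a b
    rw [Matrix.of_apply, hMentry a b, hMexdef]
    fin_cases a <;> fin_cases b <;>
      simp only [Matrix.cons_val', Matrix.cons_val_zero, Matrix.cons_val_one, Matrix.head_cons,
        Matrix.empty_val', Matrix.cons_val_fin_one, Matrix.head_fin_const, Matrix.of_apply,
        Fin.mk_zero, Fin.mk_one, Fin.reduceFinMk, Fin.isValue, Matrix.cons_val_two,
        Matrix.tail_cons]
    · rw [hTdiag 0]; push_cast; ring
    · rw [hoff 0 1 2 (by decide) c01]; push_cast; ring
    · rw [hoff' 2 0 1 (by decide) c20]; push_cast; ring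
    · rw [hoff' 0 1 2 (by decide) c01]; push_cast; ring
    · rw [hTdiag 1]; push_cast; ring
    · rw [hoff 1 2 0 (by decide) c12]; push_cast; ring
    · rw [hoff 2 0 1 (by decide) c20]; push_cast; ring
    · rw [hoff' 1 2 0 (by decide) c12]; push_cast; ring
    · rw [hTdiag 2]; push_cast; ring
  rw [hM] at hMps
  have hdet : Mex.det = ((covMat ρ 0 0 * covMat ρ 1 1 * covMat ρ 2 2
      - (1/4) * (l 0 ^ 2 * covMat ρ 0 0 + l 1 ^ 2 * covMat ρ 1 1 + l 2 ^ 2 * covMat ρ 2 2)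
      : ℝ) : ℂ) := by
    rw [hMexdef, Matrix.det_fin_three]
    simp only [Matrix.cons_val', Matrix.cons_val_zero, Matrix.cons_val_one, Matrix.head_cons,
      Matrix.empty_val', Matrix.cons_val_fin_one, Matrix.head_fin_const, Matrix.of_apply,
      Matrix.cons_val_two, Matrix.tail_cons]
    push_cast
    linear_combination (((l 0 : ℂ))^2 * ((covMat ρ 0 0 : ℝ) : ℂ) + ((l 1 : ℂ))^2 * ((covMat ρ 1 1 : ℝ) : ℂ)
      + ((l 2 : ℂ))^2 * ((covMat ρ 2 2 : ℝ) : ℂ)) / 4 * Complex.I_sq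
  have h0 : 0 ≤ (Mex.det).re := by
    rw [hMps.1.det_eq_prod_eigenvalues]
    rw [← RCLike.ofReal_prod]
    have hnn : 0 ≤ ∏ i, hMps.1.eigenvalues i :=
      Finset.prod_nonneg fun i _ => hMps.eigenvalues_nonneg i
    exact hnn.trans_eq (rfl : ∏ i, hMps.1.eigenvalues i
      = (((∏ i, hMps.1.eigenvalues i : ℝ) : ℂ)).re)
  rw [hdet, Complex.ofReal_re] at h0
  linarith
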